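/- arXiv:1805.08008 — 2 statements merged into one kernel-verified Lean document; each statement's English description precedes it below -/
import Mathlib

section
/- If β = (β_1,…,β_N) and β' = (β'_1,…,β'_N) are segment-length vectors with all components positive and β is a componentwise integer multiple of β' (i.e., β_n = d_n·β'_n for some positive integers d_n for every n), then the optimal time-slotted social welfare satisfies W̃*(β) ≤ W̃*(β'). -/
open MeasureTheory

/-- A downloaded video segment: owner `u`, bitrate level `z`, and download
start/end times `ts`, `te`.  Its bitrate is `R u z` (so the model constraint
`r = R_u^z` holds by construction) and its data volume is `R u z * β u`. -/
structure Seg (N Z : ℕ) where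
  u : Fin N
  z : Fin Z
  ts : ℝ
  te : ℝ

namespace Crowd

variable {N Z : ℕ}

/-- Well-formedness of the model parameters: horizon `T > 0`; positive integrable
cellular capacities `h`; `{0,1}`-valued encounter indicators `e` with `e n n ≡ 1`;
positive buffer sizes `Q`; positive strictly increasing bitrates `R n 1 < … < R n Z`;
nondecreasing value functions `g` on `(0,∞)`; positive loss coefficients
`φqdeg, φrebuf`; nonnegative energy coefficients `ctime, cdata, wdata`. -/
def Valid (T : ℝ) (h : Fin N → ℝ → ℝ) (e : Fin N → Fin N → ℝ → ℝ)
    (Q : Fin N → ℝ) (R : Fin N → Fin Z → ℝ) (g : Fin N → ℝ → ℝ)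
    (φqdeg φrebuf ctime cdata wdata : Fin N → ℝ) : Prop :=
  0 < T ∧
  (∀ n, IntegrableOn (h n) (Set.Icc 0 T)) ∧
  (∀ n, ∀ t ∈ Set.Icc (0 : ℝ) T, 0 < h n t) ∧
  (∀ n m t, e n m t = 0 ∨ e n m t = 1) ∧
  (∀ n t, e n n t = 1) ∧
  (∀ n, 0 < Q n) ∧
  (∀ n, StrictMono (R n)) ∧ (∀ n z, 0 < R n z) ∧
  (∀ n, MonotoneOn (g n) (Set.Ioi 0)) ∧
  (∀ n, 0 < φqdeg n) ∧ (∀ n, 0 < φrebuf n) ∧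
  (∀ n, 0 ≤ ctime n) ∧ (∀ n, 0 ≤ cdata n) ∧ (∀ n, 0 ≤ wdata n)

/-! ### The virtual time-slotted crowdsourced streaming system -/

/-- Amount of data (in Mbit) user `n` downloads for user `m` in slot `τ`:
`x_{n,m}(τ) = Σ_z κ_{n,m}^z(τ)·β_m·R_m^z`. -/
noncomputable def xdat (R : Fin N → Fin Z → ℝ) (β : Fin N → ℝ)
    (κ : Fin N → Fin N → Fin Z → ℕ → ℕ) (n m : Fin N) (τ : ℕ) : ℝ :=
  ∑ z : Fin Z, (κ n m z τ : ℝ) * β m * R m z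

/-- Total data user `n` downloads in slot `τ`: `x^dl_n(τ) = Σ_m x_{n,m}(τ)`. -/
noncomputable def xdl (R : Fin N → Fin Z → ℝ) (β : Fin N → ℝ)
    (κ : Fin N → Fin N → Fin Z → ℕ → ℕ) (n : Fin N) (τ : ℕ) : ℝ :=
  ∑ m : Fin N, xdat R β κ n m τ

/-- Aggregate cellular capacity of user `n` in slot `τ` (the interval `[τ-1, τ]`). -/
noncomputable def Hcap (h : Fin N → ℝ → ℝ) (n : Fin N) (τ : ℕ) : ℝ :=
  ∫ t in ((τ : ℝ) - 1)..(τ : ℝ), h n t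

/-- Total playback time user `m` receives in slot `τ`:
`y^re_m(τ) = Σ_n Σ_z κ_{n,m}^z(τ)·β_m`. -/
noncomputable def yre (β : Fin N → ℝ) (κ : Fin N → Fin N → Fin Z → ℕ → ℕ)
    (m : Fin N) (τ : ℕ) : ℝ :=
  ∑ n : Fin N, ∑ z : Fin Z, (κ n m z τ : ℝ) * β m

/-- Buffer level of user `m` at the end of slot `τ`:
`q_m(0) = 0`, `q_m(τ) = max (q_m(τ-1) - 1) 0 + y^re_m(τ)`. -/
noncomputable def qslot (β : Fin N → ℝ) (κ : Fin N → Fin N → Fin Z → ℕ → ℕ)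
    (m : Fin N) : ℕ → ℝ
  | 0 => 0
  | τ + 1 => max (qslot β κ m τ - 1) 0 + yre β κ m (τ + 1)

/-- Feasibility of a time-slotted downloading vector profile `κ`
(constraints C̃.2, C̃.3, and C̃.4). -/
def FeasibleSlot (T : ℕ) (h : Fin N → ℝ → ℝ) (e : Fin N → Fin N → ℝ → ℝ)
    (Q : Fin N → ℝ) (R : Fin N → Fin Z → ℝ) (β : Fin N → ℝ)
    (κ : Fin N → Fin N → Fin Z → ℕ → ℕ) : Prop :=
  -- C̃.2: slot capacity
  (∀ n, ∀ τ ∈ Finset.Icc 1 T, xdl R β κ n τ ≤ Hcap h n τ) ∧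
  -- C̃.3: encounter constraint
  (∀ n m, m ≠ n → ∀ τ ∈ Finset.Icc 1 T, 0 < xdat R β κ n m τ →
    ∀ t ∈ Set.Icc ((τ : ℝ) - 1) (τ : ℝ), e n m t = 1) ∧
  -- C̃.4: buffer constraint
  (∀ m, ∀ τ ∈ Finset.Icc 1 T, 0 ≤ qslot β κ m τ ∧ qslot β κ m τ ≤ Q m)

/-- The (finite) set of bitrates that user `n` receives in slot `τ`. -/
noncomputable def Bset (R : Fin N → Fin Z → ℝ) (κ : Fin N → Fin N → Fin Z → ℕ → ℕ)
    (n : Fin N) (τ : ℕ) : Finset ℝ :=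
  (Finset.univ.filter fun p : Fin N × Fin Z => 0 < κ p.1 n p.2 τ).image fun p => R n p.2

/-- Payoff of user `n` in the time-slotted system: value from video quality, minus
quality-degradation loss (between the highest bitrate `r^H_n(τ-1)` of the previous slot
and the lowest bitrate `r^L_n(τ)` of the current slot, whenever both slots deliver
segments to `n`; within a slot the received segments are sorted in ascending bitrate,
so no degradation occurs inside a slot), minus rebuffering loss, minus cellular
downloading energy, minus WiFi exchange energy. -/
noncomputable def slotPayoff (T : ℕ) (h : Fin N → ℝ → ℝ) (R : Fin N → Fin Z → ℝ)
    (g : Fin N → ℝ → ℝ) (φqdeg φrebuf ctime cdata wdata : Fin N → ℝ) (β : Fin N → ℝ)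
    (κ : Fin N → Fin N → Fin Z → ℕ → ℕ) (n : Fin N) : ℝ :=
  (∑ τ ∈ Finset.Icc 1 T, ∑ m : Fin N, ∑ z : Fin Z, (κ m n z τ : ℝ) * β n * g n (R n z))
  - (∑ τ ∈ Finset.Icc 2 T,
      if hp : (Bset R κ n (τ - 1)).Nonempty ∧ (Bset R κ n τ).Nonempty then
        φqdeg n * max ((Bset R κ n (τ - 1)).max' hp.1 - (Bset R κ n τ).min' hp.2) 0
      else 0)
  - (∑ τ ∈ Finset.Icc 2 T, φrebuf n * max (1 - qslot β κ n (τ - 1)) 0)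
  - (∑ τ ∈ Finset.Icc 1 T,
      (ctime n * (xdl R β κ n τ / Hcap h n τ) + cdata n * xdl R β κ n τ))
  - (∑ τ ∈ Finset.Icc 1 T, ∑ m ∈ Finset.univ.erase n, wdata n * xdat R β κ n m τ)

/-- Social welfare of the time-slotted system. -/
noncomputable def slotWelfare (T : ℕ) (h : Fin N → ℝ → ℝ) (R : Fin N → Fin Z → ℝ)
    (g : Fin N → ℝ → ℝ) (φqdeg φrebuf ctime cdata wdata : Fin N → ℝ) (β : Fin N → ℝ)
    (κ : Fin N → Fin N → Fin Z → ℕ → ℕ) : ℝ :=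
  ∑ n : Fin N, slotPayoff T h R g φqdeg φrebuf ctime cdata wdata β κ n

/-- `W̃*(β)`: the optimal social welfare of the (virtual) time-slotted system. -/
noncomputable def slotSWstar (T : ℕ) (h : Fin N → ℝ → ℝ) (e : Fin N → Fin N → ℝ → ℝ)
    (Q : Fin N → ℝ) (R : Fin N → Fin Z → ℝ) (g : Fin N → ℝ → ℝ)
    (φqdeg φrebuf ctime cdata wdata : Fin N → ℝ) (β : Fin N → ℝ) : ℝ :=
  sSup {W : ℝ | ∃ κ : Fin N → Fin N → Fin Z → ℕ → ℕ,
    FeasibleSlot T h e Q R β κ ∧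
    W = slotWelfare T h R g φqdeg φrebuf ctime cdata wdata β κ}

/-- Every feasible welfare value is bounded above by a constant depending only
on the model parameters (not on `β` or `κ`). -/
lemma welfare_le_bound (T : ℕ)
    (h : Fin N → ℝ → ℝ) (e : Fin N → Fin N → ℝ → ℝ) (Q : Fin N → ℝ)
    (R : Fin N → Fin Z → ℝ) (g : Fin N → ℝ → ℝ)
    (φqdeg φrebuf ctime cdata wdata : Fin N → ℝ) (β : Fin N → ℝ)
    (κ : Fin N → Fin N → Fin Z → ℕ → ℕ)
    (hvalid : Valid (T : ℝ) h e Q R g φqdeg φrebuf ctime cdata wdata)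
    (hβ : ∀ n, 0 < β n)
    (hfeas : FeasibleSlot T h e Q R β κ) :
    slotWelfare T h R g φqdeg φrebuf ctime cdata wdata β κ ≤
      ∑ n : Fin N, ∑ τ ∈ Finset.Icc 1 T, ∑ m : Fin N, ∑ z : Fin Z,
        Hcap h m τ / R n z * max (g n (R n z)) 0 := by
  obtain ⟨hT, hint, hpos, _, _, hQ, hRmono, hRpos, hg, hφ1, hφ2, hct, hcd, hwd⟩ := hvalid
  have hHcap : ∀ m : Fin N, ∀ τ ∈ Finset.Icc 1 T, 0 ≤ Hcap h m τ := by
    intro m τ hτ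
    rw [Finset.mem_Icc] at hτ
    have h1 : (1 : ℝ) ≤ (τ : ℝ) := by exact_mod_cast hτ.1
    have h2 : (τ : ℝ) ≤ (T : ℝ) := by exact_mod_cast hτ.2
    apply intervalIntegral.integral_nonneg (by linarith)
    intro t ht
    exact (hpos m t ⟨by linarith [ht.1], le_trans ht.2 h2⟩).le
  have hxdat : ∀ a b τ, 0 ≤ xdat R β κ a b τ := by
    intro a b τ
    apply Finset.sum_nonneg
    intro z _
    have h1 := (hβ b).le
    have h2 := (hRpos b z).le
    positivity
  have hxdl : ∀ a τ, 0 ≤ xdl R β κ a τ :=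
    fun a τ => Finset.sum_nonneg fun m _ => hxdat a m τ
  unfold slotWelfare
  apply Finset.sum_le_sum
  intro n _
  unfold slotPayoff
  have hA : (∑ τ ∈ Finset.Icc 1 T, ∑ m : Fin N, ∑ z : Fin Z,
      (κ m n z τ : ℝ) * β n * g n (R n z)) ≤
      ∑ τ ∈ Finset.Icc 1 T, ∑ m : Fin N, ∑ z : Fin Z,
        Hcap h m τ / R n z * max (g n (R n z)) 0 := by
    apply Finset.sum_le_sum
    intro τ hτ
    apply Finset.sum_le_sum
    intro m _
    apply Finset.sum_le_sum
    intro z _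
    rcases le_total (g n (R n z)) 0 with hg0 | hg0
    · rw [max_eq_right hg0, mul_zero]
      have hk : 0 ≤ (κ m n z τ : ℝ) * β n := by
        have := (hβ n).le; positivity
      exact mul_nonpos_of_nonneg_of_nonpos hk hg0
    · rw [max_eq_left hg0]
      have hchain : (κ m n z τ : ℝ) * β n * R n z ≤ Hcap h m τ := by
        have h1 : (κ m n z τ : ℝ) * β n * R n z ≤ xdat R β κ m n τ := by
          apply Finset.single_le_sum (f := fun z' => (κ m n z' τ : ℝ) * β n * R n z')
            (fun z' _ => by
              have := (hβ n).le; have := (hRpos n z').le; positivity)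
            (Finset.mem_univ z)
        have h2 : xdat R β κ m n τ ≤ xdl R β κ m τ :=
          Finset.single_le_sum (fun m' _ => hxdat m m' τ) (Finset.mem_univ n)
        have h3 := hfeas.1 m τ hτ
        linarith
      have hk : (κ m n z τ : ℝ) * β n ≤ Hcap h m τ / R n z :=
        (le_div_iff₀ (hRpos n z)).mpr hchain
      exact mul_le_mul_of_nonneg_right hk hg0
  have hB : 0 ≤ ∑ τ ∈ Finset.Icc 2 T,
      (if hp : (Bset R κ n (τ - 1)).Nonempty ∧ (Bset R κ n τ).Nonempty then
        φqdeg n * max ((Bset R κ n (τ - 1)).max' hp.1 - (Bset R κ n τ).min' hp.2) 0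
      else 0) := by
    apply Finset.sum_nonneg
    intro τ _
    split
    · exact mul_nonneg (hφ1 n).le (le_max_right _ _)
    · exact le_refl 0
  have hC : 0 ≤ ∑ τ ∈ Finset.Icc 2 T, φrebuf n * max (1 - qslot β κ n (τ - 1)) 0 :=
    Finset.sum_nonneg fun τ _ => mul_nonneg (hφ2 n).le (le_max_right _ _)
  have hD : 0 ≤ ∑ τ ∈ Finset.Icc 1 T,
      (ctime n * (xdl R β κ n τ / Hcap h n τ) + cdata n * xdl R β κ n τ) := by
    apply Finset.sum_nonneg
    intro τ hτ
    exact add_nonneg (mul_nonneg (hct n) (div_nonneg (hxdl n τ) (hHcap n τ hτ)))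
      (mul_nonneg (hcd n) (hxdl n τ))
  have hE : 0 ≤ ∑ τ ∈ Finset.Icc 1 T, ∑ m ∈ Finset.univ.erase n,
      wdata n * xdat R β κ n m τ :=
    Finset.sum_nonneg fun τ _ => Finset.sum_nonneg fun m _ =>
      mul_nonneg (hwd n) (hxdat n m τ)
  linarith

/-- **Proposition 1 (time-slotted part).** If the segment-length vector `β` is a
componentwise integer multiple of `β'` (both with positive components), then the
optimal time-slotted social welfare satisfies `W̃*(β) ≤ W̃*(β')`. -/
theorem slotSWstar_mono_of_integer_multiple
    (N Z T : ℕ) (hT : 1 ≤ T)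
    (h : Fin N → ℝ → ℝ) (e : Fin N → Fin N → ℝ → ℝ) (Q : Fin N → ℝ)
    (R : Fin N → Fin Z → ℝ) (g : Fin N → ℝ → ℝ)
    (φqdeg φrebuf ctime cdata wdata : Fin N → ℝ) (β β' : Fin N → ℝ)
    (hvalid : Valid (T : ℝ) h e Q R g φqdeg φrebuf ctime cdata wdata)
    (hβ : ∀ n, 0 < β n) (hβ' : ∀ n, 0 < β' n)
    (hmult : ∀ n, ∃ d : ℕ, 0 < d ∧ β n = (d : ℝ) * β' n) :
    slotSWstar T h e Q R g φqdeg φrebuf ctime cdata wdata β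
      ≤ slotSWstar T h e Q R g φqdeg φrebuf ctime cdata wdata β' := by
  classical
  obtain ⟨hTpos, hint, hpos, he01, he1, hQ, hRmono, hRpos, hg, hφ1, hφ2, hct, hcd, hwd⟩ :=
    hvalid
  choose d hd1 hd2 using hmult
  have hHcap : ∀ m : Fin N, ∀ τ ∈ Finset.Icc 1 T, 0 ≤ Hcap h m τ := by
    intro m τ hτ
    rw [Finset.mem_Icc] at hτ
    have h1 : (1 : ℝ) ≤ (τ : ℝ) := by exact_mod_cast hτ.1
    have h2 : (τ : ℝ) ≤ (T : ℝ) := by exact_mod_cast hτ.2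
    apply intervalIntegral.integral_nonneg (by linarith)
    intro t ht
    exact (hpos m t ⟨by linarith [ht.1], le_trans ht.2 h2⟩).le
  set A : Set ℝ := {W : ℝ | ∃ κ : Fin N → Fin N → Fin Z → ℕ → ℕ,
    FeasibleSlot T h e Q R β κ ∧
    W = slotWelfare T h R g φqdeg φrebuf ctime cdata wdata β κ} with hA
  set B : Set ℝ := {W : ℝ | ∃ κ : Fin N → Fin N → Fin Z → ℕ → ℕ,
    FeasibleSlot T h e Q R β' κ ∧
    W = slotWelfare T h R g φqdeg φrebuf ctime cdata wdata β' κ} with hB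
  have hAB : A ⊆ B := by
    rintro W ⟨κ, hfeas, rfl⟩
    set κ' : Fin N → Fin N → Fin Z → ℕ → ℕ := fun a b z τ => d b * κ a b z τ with hκ'
    have hx : ∀ a b τ, xdat R β' κ' a b τ = xdat R β κ a b τ := by
      intro a b τ
      unfold xdat
      apply Finset.sum_congr rfl
      intro z _
      simp only [hκ']
      push_cast
      rw [hd2 b]
      ring
    have hxdleq : ∀ a τ, xdl R β' κ' a τ = xdl R β κ a τ := by
      intro a τ
      unfold xdl
      exact Finset.sum_congr rfl fun m _ => hx a m τ
    have hy : ∀ b τ, yre β' κ' b τ = yre β κ b τ := by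
      intro b τ
      unfold yre
      apply Finset.sum_congr rfl
      intro a _
      apply Finset.sum_congr rfl
      intro z _
      simp only [hκ']
      push_cast
      rw [hd2 b]
      ring
    have hq : ∀ b τ, qslot β' κ' b τ = qslot β κ b τ := by
      intro b τ
      induction τ with
      | zero => rfl
      | succ τ ih => simp only [qslot, ih, hy]
    have hBset : ∀ a τ, Bset R κ' a τ = Bset R κ a τ := by
      intro a τ
      unfold Bset
      congr 1
      apply Finset.filter_congr
      intro p _
      simp only [hκ', Nat.pos_iff_ne_zero]
      rw [Nat.mul_ne_zero_iff]
      simp [(hd1 a).ne']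
    have hfeas' : FeasibleSlot T h e Q R β' κ' := by
      refine ⟨?_, ?_, ?_⟩
      · intro n τ hτ
        rw [hxdleq]
        exact hfeas.1 n τ hτ
      · intro n m hmn τ hτ hxpos
        rw [hx] at hxpos
        exact hfeas.2.1 n m hmn τ hτ hxpos
      · intro m τ hτ
        rw [hq]
        exact hfeas.2.2 m τ hτ
    have hwelf : slotWelfare T h R g φqdeg φrebuf ctime cdata wdata β' κ' =
        slotWelfare T h R g φqdeg φrebuf ctime cdata wdata β κ := by
      unfold slotWelfare slotPayoff
      apply Finset.sum_congr rfl
      intro n _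
      have e1 : (∑ τ ∈ Finset.Icc 1 T, ∑ m : Fin N, ∑ z : Fin Z,
          (κ' m n z τ : ℝ) * β' n * g n (R n z)) =
          ∑ τ ∈ Finset.Icc 1 T, ∑ m : Fin N, ∑ z : Fin Z,
          (κ m n z τ : ℝ) * β n * g n (R n z) := by
        apply Finset.sum_congr rfl; intro τ _
        apply Finset.sum_congr rfl; intro m _
        apply Finset.sum_congr rfl; intro z _
        simp only [hκ']
        push_cast
        rw [hd2 n]
        ring
      have e2 : (∑ τ ∈ Finset.Icc 2 T,
          (if hp : (Bset R κ' n (τ - 1)).Nonempty ∧ (Bset R κ' n τ).Nonempty then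
            φqdeg n * max ((Bset R κ' n (τ - 1)).max' hp.1 - (Bset R κ' n τ).min' hp.2) 0
          else 0)) =
          ∑ τ ∈ Finset.Icc 2 T,
          (if hp : (Bset R κ n (τ - 1)).Nonempty ∧ (Bset R κ n τ).Nonempty then
            φqdeg n * max ((Bset R κ n (τ - 1)).max' hp.1 - (Bset R κ n τ).min' hp.2) 0
          else 0) := by
        apply Finset.sum_congr rfl
        intro τ _
        simp only [hBset]
      have e3 : (∑ τ ∈ Finset.Icc 2 T, φrebuf n * max (1 - qslot β' κ' n (τ - 1)) 0) =
          ∑ τ ∈ Finset.Icc 2 T, φrebuf n * max (1 - qslot β κ n (τ - 1)) 0 := by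
        apply Finset.sum_congr rfl
        intro τ _
        rw [hq]
      have e4 : (∑ τ ∈ Finset.Icc 1 T,
          (ctime n * (xdl R β' κ' n τ / Hcap h n τ) + cdata n * xdl R β' κ' n τ)) =
          ∑ τ ∈ Finset.Icc 1 T,
          (ctime n * (xdl R β κ n τ / Hcap h n τ) + cdata n * xdl R β κ n τ) := by
        apply Finset.sum_congr rfl
        intro τ _
        rw [hxdleq]
      have e5 : (∑ τ ∈ Finset.Icc 1 T, ∑ m ∈ Finset.univ.erase n,
          wdata n * xdat R β' κ' n m τ) =
          ∑ τ ∈ Finset.Icc 1 T, ∑ m ∈ Finset.univ.erase n,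
          wdata n * xdat R β κ n m τ := by
        apply Finset.sum_congr rfl
        intro τ _
        apply Finset.sum_congr rfl
        intro m _
        rw [hx]
      rw [e1, e2, e3, e4, e5]
    exact ⟨κ', hfeas', hwelf.symm⟩
  have hvalid' : Valid (T : ℝ) h e Q R g φqdeg φrebuf ctime cdata wdata :=
    ⟨hTpos, hint, hpos, he01, he1, hQ, hRmono, hRpos, hg, hφ1, hφ2, hct, hcd, hwd⟩
  have hBdd : BddAbove B := by
    refine ⟨∑ n : Fin N, ∑ τ ∈ Finset.Icc 1 T, ∑ m : Fin N, ∑ z : Fin Z,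
      Hcap h m τ / R n z * max (g n (R n z)) 0, ?_⟩
    rintro W ⟨κ, hfeas, rfl⟩
    exact welfare_le_bound T h e Q R g φqdeg φrebuf ctime cdata wdata β' κ
      hvalid' hβ' hfeas
  have hANe : A.Nonempty := by
    set κ0 : Fin N → Fin N → Fin Z → ℕ → ℕ := fun _ _ _ _ => 0 with hκ0
    refine ⟨slotWelfare T h R g φqdeg φrebuf ctime cdata wdata β κ0, κ0, ?_, rfl⟩
    have hx0 : ∀ a b τ, xdat R β κ0 a b τ = 0 := by
      intro a b τ
      simp [xdat, hκ0]
    have hq0 : ∀ b τ, qslot β κ0 b τ = 0 := by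
      intro b τ
      induction τ with
      | zero => rfl
      | succ τ ih => simp only [qslot, ih]; simp [yre, hκ0]
    refine ⟨?_, ?_, ?_⟩
    · intro n τ hτ
      have : xdl R β κ0 n τ = 0 := by
        simp [xdl, hx0]
      rw [this]
      exact hHcap n τ hτ
    · intro n m _ τ _ hxpos
      rw [hx0] at hxpos
      exact absurd hxpos (lt_irrefl 0)
    · intro m τ _
      rw [hq0]
      exact ⟨le_refl 0, (hQ m).le⟩
  exact csSup_le_csSup hBdd hANe hAB

end Crowd
end

section
/- Monotonicity of total rebuffering in inter-arrival gaps: let β ≥ 0, let Δ_1, …, Δ_K ≥ 0 and Δ'_1, …, Δ'_K ≥ 0 satisfy Δ'_k ≤ Δ_k for every k, let q'_0 ≥ q_0 ≥ 0, and define q_k = max(q_{k−1} − Δ_k, 0) + β and q'_k = max(q'_{k−1} − Δ'_k, 0) + β for k = 1, …, K. Then max(Δ'_k − q'_{k−1}, 0) ≤ max(Δ_k − q_{k−1}, 0) for every k, and consequently Σ_{k=1}^{K} max(Δ'_k − q'_{k−1}, 0) ≤ Σ_{k=1}^{K} max(Δ_k − q_{k−1}, 0). -/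
/-- **Monotonicity of total rebuffering in inter-arrival gaps.**
If the gaps `Δ'` are pointwise no larger than the gaps `Δ` and the initial buffer level
`q' 0` is at least `q 0`, then under the buffer recursion
`q k = max (q (k-1) - Δ k) 0 + β` each per-step rebuffering time satisfies
`max(Δ'_k - q'_{k-1}, 0) ≤ max(Δ_k - q_{k-1}, 0)`, and consequently
`Σ_{k=1}^{K} max(Δ'_k - q'_{k-1}, 0) ≤ Σ_{k=1}^{K} max(Δ_k - q_{k-1}, 0)`. -/
theorem rebuffering_monotone
    (K : ℕ) (β : ℝ) (hβ : 0 ≤ β) (Δ Δ' : ℕ → ℝ) (q q' : ℕ → ℝ)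
    (hΔ : ∀ k, 1 ≤ k → k ≤ K → 0 ≤ Δ k)
    (hΔ' : ∀ k, 1 ≤ k → k ≤ K → 0 ≤ Δ' k)
    (hΔle : ∀ k, 1 ≤ k → k ≤ K → Δ' k ≤ Δ k)
    (hq0 : 0 ≤ q 0) (hq0' : q 0 ≤ q' 0)
    (hrec : ∀ k, 1 ≤ k → k ≤ K → q k = max (q (k - 1) - Δ k) 0 + β)
    (hrec' : ∀ k, 1 ≤ k → k ≤ K → q' k = max (q' (k - 1) - Δ' k) 0 + β) :
    (∀ k, 1 ≤ k → k ≤ K → max (Δ' k - q' (k - 1)) 0 ≤ max (Δ k - q (k - 1)) 0) ∧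
    ∑ k ∈ Finset.Icc 1 K, max (Δ' k - q' (k - 1)) 0
      ≤ ∑ k ∈ Finset.Icc 1 K, max (Δ k - q (k - 1)) 0 := by
  have hle : ∀ k, k ≤ K → q k ≤ q' k := by
    intro k
    induction k with
    | zero => intro _; exact hq0'
    | succ n ih =>
      intro hk
      have hn : n ≤ K := Nat.le_of_succ_le hk
      have h1 : 1 ≤ n + 1 := Nat.succ_le_succ (Nat.zero_le n)
      rw [hrec (n+1) h1 hk, hrec' (n+1) h1 hk]
      simp only [Nat.add_sub_cancel]
      have := ih hn
      have := hΔle (n+1) h1 hk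
      gcongr <;> linarith
  have hpt : ∀ k, 1 ≤ k → k ≤ K → max (Δ' k - q' (k - 1)) 0 ≤ max (Δ k - q (k - 1)) 0 := by
    intro k h1 hk
    have hkm : k - 1 ≤ K := le_trans (Nat.sub_le k 1) hk
    have := hle (k-1) hkm
    have := hΔle k h1 hk
    apply max_le_max _ le_rfl
    linarith
  refine ⟨hpt, Finset.sum_le_sum ?_⟩
  intro k hk
  rw [Finset.mem_Icc] at hk
  exact hpt k hk.1 hk.2
end
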